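/- Let p ≥ 1, m₁, m₂ ≥ 0, a₁,…,a_p ∈ [0, m₁], b₁,…,b_p ∈ [−m₂, m₂]. Define g(t) = t²/(1+t²) for t ∈ ℝ and q(u) = Σ_{i=1}^p a_i sin²(b_i u_i) for u ∈ ℝ^p, and define f : ℝ^p → ℝ by f(x) = g(‖x‖) q(x/‖x‖) for x ≠ 0 and f(0) = 0. Then for every x ≠ 0, ‖∇f(x)‖ ≤ m₁ p + m₁ m₂ √p; i.e., f is Lipschitz continuous with constant m₁ p + m₁ m₂ √p on ℝ^p \ {0}. -/

import Mathlib

private lemma aux_gderiv_le (r : ℝ) (hr : 0 < r) : |2*r/(1+r^2)^2| ≤ 1 := by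
  rw [abs_of_nonneg (by positivity), div_le_one (by positivity)]
  nlinarith [sq_nonneg (1 - r), sq_nonneg (1 + r^2), sq_nonneg r]

private lemma aux_g_div_r_le (r : ℝ) (hr : 0 < r) : r^2/(1+r^2) * r⁻¹ ≤ 1 := by
  have h0 : r^2 * r⁻¹ = r := by rw [sq, mul_assoc, mul_inv_cancel₀ hr.ne', mul_one]
  rw [div_mul_eq_mul_div, h0, div_le_one (by positivity)]
  nlinarith [sq_nonneg (r-1)]

set_option maxHeartbeats 1000000 in
theorem spherical_example_gradient_bound
    (p : ℕ) (hp : 1 ≤ p) (m₁ m₂ : ℝ) (hm₁ : 0 ≤ m₁) (hm₂ : 0 ≤ m₂)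
    (a b : Fin p → ℝ)
    (ha : ∀ i, a i ∈ Set.Icc (0:ℝ) m₁) (hb : ∀ i, b i ∈ Set.Icc (-m₂) m₂)
    (g : ℝ → ℝ) (hg : ∀ t, g t = t^2 / (1 + t^2))
    (q : EuclideanSpace ℝ (Fin p) → ℝ)
    (hq : ∀ u, q u = ∑ i : Fin p, a i * (Real.sin (b i * u i))^2)
    (f : EuclideanSpace ℝ (Fin p) → ℝ)
    (hf0 : f 0 = 0)
    (hf : ∀ x : EuclideanSpace ℝ (Fin p), x ≠ 0 → f x = g ‖x‖ * q (‖x‖⁻¹ • x)) :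
    ∀ x : EuclideanSpace ℝ (Fin p), x ≠ 0 →
      ‖gradient f x‖ ≤ m₁ * p + m₁ * m₂ * Real.sqrt p := by
  intro x hx
  let E := EuclideanSpace ℝ (Fin p)
  set r : ℝ := ‖x‖ with hrdef
  have hr : (0:ℝ) < r := norm_pos_iff.mpr hx
  -- derivative of the norm
  set N : E →L[ℝ] ℝ := r⁻¹ • innerSL ℝ x with hNdef
  have hN : HasFDerivAt (fun y : E => ‖y‖) N x := by
    have h1 : HasFDerivAt (fun y : E => ‖y‖^2) (2 • (innerSL ℝ x)) x := by
      simpa using (hasFDerivAt_id x).norm_sq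
    have h2 := h1.sqrt (by positivity : ‖x‖^2 ≠ 0)
    have heq : (fun y : E => Real.sqrt (‖y‖^2)) = fun y : E => ‖y‖ := by
      funext y; exact Real.sqrt_sq (norm_nonneg y)
    rw [heq] at h2
    refine h2.congr_fderiv ?_
    rw [Real.sqrt_sq (norm_nonneg x)]
    ext v
    simp [N, ContinuousLinearMap.smul_apply]
    field_simp; ring
  -- derivative of g ∘ norm
  have hgd : HasDerivAt g (2*r/(1+r^2)^2) r := by
    have h1 : HasDerivAt (fun t : ℝ => t^2 / (1+t^2))
        ((2*r*(1+r^2) - r^2*(2*r))/(1+r^2)^2) r := by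
      exact ((hasDerivAt_pow 2 r).div (((hasDerivAt_pow 2 r).const_add 1))
        (by positivity)) |>.congr_deriv (by ring_nf)
    have : (fun t : ℝ => t^2/(1+t^2)) = g := by funext t; rw [hg]
    rw [this] at h1
    convert h1 using 1; field_simp; ring
  have hG : HasFDerivAt (fun y : E => g ‖y‖) ((2*r/(1+r^2)^2) • N) x :=
    hgd.comp_hasFDerivAt x hN
  -- derivative of the inverse norm
  have hInv : HasFDerivAt (fun y : E => ‖y‖⁻¹) ((-(r^2)⁻¹) • N) x :=
    (hasDerivAt_inv hr.ne').comp_hasFDerivAt x hN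
  -- derivative of each coordinate quotient c i y = ‖y‖⁻¹ * y i
  set M : Fin p → (E →L[ℝ] ℝ) := fun i =>
    ‖x‖⁻¹ • (EuclideanSpace.proj i : E →L[ℝ] ℝ) + (x i) • ((-(r^2)⁻¹) • N) with hMdef
  have hM : ∀ i, HasFDerivAt (fun y : E => ‖y‖⁻¹ * y i) (M i) x := by
    intro i
    have hproj : HasFDerivAt (fun y : E => y i) (EuclideanSpace.proj i : E →L[ℝ] ℝ) x :=
      (EuclideanSpace.proj i : E →L[ℝ] ℝ).hasFDerivAt
    exact hInv.mul hproj
  -- values at x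
  set u : Fin p → ℝ := fun i => r⁻¹ * x i with hudef
  set d : Fin p → ℝ := fun i => 2 * Real.sin (b i * u i) ^ 1 * (Real.cos (b i * u i) * b i)
    with hddef
  -- derivative of each ψ i = sin(b i * (‖y‖⁻¹ * y i))^2
  have hpsi : ∀ i, HasFDerivAt (fun y : E => (Real.sin (b i * (‖y‖⁻¹ * y i)))^2)
      (d i • M i) x := by
    intro i
    have h1 : HasDerivAt (fun t : ℝ => (Real.sin (b i * t))^2) (d i) (u i) := by
      have hs : HasDerivAt (fun t : ℝ => Real.sin (b i * t))
          (Real.cos (b i * u i) * b i) (u i) := by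
        exact ((Real.hasDerivAt_sin (b i * u i)).comp (u i)
          ((hasDerivAt_id (u i)).const_mul (b i))).congr_deriv (by ring)
      exact (hs.pow 2).congr_deriv (by simp [d])
    exact h1.comp_hasFDerivAt x (hM i)
  -- total derivative
  set S : E →L[ℝ] ℝ := ∑ i : Fin p, a i • (d i • M i) with hSdef
  have hSum : HasFDerivAt (fun y : E => ∑ i : Fin p, a i * (Real.sin (b i * (‖y‖⁻¹ * y i)))^2)
      S x := by
    refine HasFDerivAt.fun_sum fun i _ => ?_
    simpa using (hpsi i).const_mul (a i)
  set Q : ℝ := ∑ i : Fin p, a i * (Real.sin (b i * u i))^2 with hQdef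
  set L : E →L[ℝ] ℝ := g r • S + Q • ((2*r/(1+r^2)^2) • N) with hLdef
  have hL : HasFDerivAt f L x := by
    have hFx : HasFDerivAt
        (fun y : E => g ‖y‖ * ∑ i : Fin p, a i * (Real.sin (b i * (‖y‖⁻¹ * y i)))^2) L x := by
      have := hG.mul hSum
      exact this
    have hev : f =ᶠ[nhds x]
        (fun y : E => g ‖y‖ * ∑ i : Fin p, a i * (Real.sin (b i * (‖y‖⁻¹ * y i)))^2) := by
      filter_upwards [IsOpen.mem_nhds isOpen_compl_singleton hx] with y hy
      have hy' : (y : E) ≠ 0 := hy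
      rw [hf y hy', hq]
      rfl
    exact hFx.congr_of_eventuallyEq hev
  -- compute the gradient norm as the operator norm of L
  have hgrad : gradient f x = (InnerProductSpace.toDual ℝ (EuclideanSpace ℝ (Fin p))).symm L := by
    rw [gradient, hL.fderiv]
  rw [hgrad, LinearIsometryEquiv.norm_map]
  have hbound_nonneg : (0:ℝ) ≤ m₁ * p + m₁ * m₂ * Real.sqrt p := by positivity
  refine ContinuousLinearMap.opNorm_le_bound L hbound_nonneg fun v => ?_
  -- auxiliary vectors
  set c : EuclideanSpace ℝ (Fin p) := WithLp.toLp 2 (fun i => a i * d i) with hcdef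
  set uvec : EuclideanSpace ℝ (Fin p) := r⁻¹ • x with huvdef
  set w : EuclideanSpace ℝ (Fin p) := v - ((inner ℝ uvec v : ℝ)) • uvec with hwdef
  have huu : ‖uvec‖ = 1 := by
    rw [huvdef, norm_smul, Real.norm_eq_abs, abs_of_pos (inv_pos.mpr hr)]
    field_simp
    exact hrdef.symm
  have hwv : ‖w‖ ≤ ‖v‖ := by
    have h1 : ‖w‖^2 = ‖v‖^2 - (inner ℝ uvec v : ℝ)^2 := by
      rw [hwdef, norm_sub_sq_real, real_inner_smul_right, norm_smul, huu,
        real_inner_comm uvec v]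
      rw [Real.norm_eq_abs, mul_one, sq_abs]
      ring
    calc ‖w‖ = Real.sqrt (‖w‖^2) := (Real.sqrt_sq (norm_nonneg _)).symm
    _ ≤ Real.sqrt (‖v‖^2) := Real.sqrt_le_sqrt (by linarith [sq_nonneg ((inner ℝ uvec v : ℝ))])
    _ = ‖v‖ := Real.sqrt_sq (norm_nonneg _)
  -- bound on coefficients
  have hd : ∀ i, |d i| ≤ m₂ := by
    intro i
    have h2 : |2 * Real.sin (b i * u i) ^ 1 * Real.cos (b i * u i)| ≤ 1 := by
      rw [pow_one]
      have : 2 * Real.sin (b i * u i) * Real.cos (b i * u i)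
          = Real.sin (2 * (b i * u i)) := (Real.sin_two_mul _).symm
      rw [this]
      exact Real.abs_sin_le_one _
    have : d i = (2 * Real.sin (b i * u i) ^ 1 * Real.cos (b i * u i)) * b i := by
      rw [hddef]; ring
    rw [this, abs_mul]
    calc |2 * Real.sin (b i * u i) ^ 1 * Real.cos (b i * u i)| * |b i| ≤ 1 * |b i| := by
          gcongr
    _ ≤ m₂ := by rw [one_mul]; exact abs_le.mpr ⟨(hb i).1, (hb i).2⟩
  have hcnorm : ‖c‖ ≤ m₁ * m₂ * Real.sqrt p := by
    rw [EuclideanSpace.norm_eq]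
    have h2 : ∑ i : Fin p, ‖c i‖^2 ≤ ∑ _i : Fin p, (m₁*m₂)^2 := by
      refine Finset.sum_le_sum fun i _ => ?_
      have hci : |c i| ≤ m₁ * m₂ := by
        have : c i = a i * d i := rfl
        rw [this, abs_mul, abs_of_nonneg (ha i).1]
        exact mul_le_mul (ha i).2 (hd i) (abs_nonneg _) hm₁
      calc ‖c i‖^2 = |c i|^2 := by rw [Real.norm_eq_abs]
      _ ≤ (m₁*m₂)^2 := by
          have := abs_nonneg (c i)
          nlinarith
    calc Real.sqrt (∑ i : Fin p, ‖c i‖^2) ≤ Real.sqrt (p * (m₁*m₂)^2) := by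
          apply Real.sqrt_le_sqrt; simpa using h2
    _ = m₁*m₂*Real.sqrt p := by
          rw [Real.sqrt_mul (by positivity), Real.sqrt_sq (by positivity)]; ring
  -- S v as an inner product
  have hiuv : (inner ℝ uvec v : ℝ) = r⁻¹ * (inner ℝ x v : ℝ) := by
    rw [huvdef, real_inner_smul_left]
  have hSv : S v = r⁻¹ * (inner ℝ c w : ℝ) := by
    rw [hSdef, ContinuousLinearMap.sum_apply]
    have hiw : (inner ℝ c w : ℝ) = ∑ i : Fin p, c i * w i := by
      rw [PiLp.inner_apply]
      simp [RCLike.inner_apply, conj_trivial, mul_comm]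
    rw [hiw, Finset.mul_sum]
    refine Finset.sum_congr rfl fun i _ => ?_
    have hMi : (M i) v = r⁻¹ * v i + x i * (-(r^2)⁻¹ * (r⁻¹ * (inner ℝ x v : ℝ))) := rfl
    have hwi : w i = v i - (r⁻¹ * (inner ℝ x v : ℝ)) * (r⁻¹ * x i) := by
      rw [hwdef]
      have : (v - ((inner ℝ uvec v : ℝ)) • uvec) i
          = v i - (inner ℝ uvec v : ℝ) * (uvec i) := rfl
      rw [this, hiuv]
      have : uvec i = r⁻¹ * x i := rfl
      rw [this]
    have hci : c i = a i * d i := rfl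
    rw [ContinuousLinearMap.smul_apply, ContinuousLinearMap.smul_apply, smul_eq_mul,
      smul_eq_mul, hMi, hwi, hci]
    have hr2 : ((r:ℝ)^2)⁻¹ = r⁻¹ * r⁻¹ := by rw [sq, mul_inv]
    rw [hr2]
    ring
  -- scalar bounds
  have hNv : |N v| ≤ ‖v‖ := by
    have hNv' : N v = r⁻¹ * (inner ℝ x v : ℝ) := rfl
    rw [hNv', abs_mul, abs_of_pos (inv_pos.mpr hr)]
    calc r⁻¹ * |(inner ℝ x v : ℝ)| ≤ r⁻¹ * (r * ‖v‖) := by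
          gcongr
          calc |(inner ℝ x v : ℝ)| ≤ ‖x‖ * ‖v‖ := abs_real_inner_le_norm x v
          _ = r * ‖v‖ := rfl
    _ = ‖v‖ := by field_simp
  have hQb : |Q| ≤ m₁ * p := by
    have hQnn : 0 ≤ Q := by
      rw [hQdef]
      exact Finset.sum_nonneg fun i _ => mul_nonneg (ha i).1 (sq_nonneg _)
    rw [abs_of_nonneg hQnn, hQdef]
    calc (∑ i : Fin p, a i * Real.sin (b i * u i)^2) ≤ ∑ _i : Fin p, m₁ := by
          refine Finset.sum_le_sum fun i _ => ?_
          calc a i * Real.sin (b i * u i)^2 ≤ m₁ * 1 := by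
                apply mul_le_mul (ha i).2 ?_ (sq_nonneg _) hm₁
                rw [← one_pow 2]
                apply sq_le_sq'
                · linarith [Real.neg_one_le_sin (b i * u i)]
                · exact Real.sin_le_one _
          _ = m₁ := mul_one m₁
    _ = m₁ * p := by simp [mul_comm]
  have hg'b : |2*r/(1+r^2)^2| ≤ 1 := aux_gderiv_le r hr
  have hgrr : g r * r⁻¹ ≤ 1 := by rw [hg]; exact aux_g_div_r_le r hr
  have hgnn : 0 ≤ g r := by rw [hg]; positivity
  -- assemble
  have hLv : L v = g r * S v + Q * ((2*r/(1+r^2)^2) * N v) := by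
    simp [hLdef, ContinuousLinearMap.add_apply, ContinuousLinearMap.smul_apply, smul_eq_mul]
  rw [hLv]
  calc |g r * S v + Q * ((2*r/(1+r^2)^2) * N v)|
      ≤ |g r * S v| + |Q * ((2*r/(1+r^2)^2) * N v)| := abs_add_le _ _
  _ ≤ m₁ * m₂ * Real.sqrt p * ‖v‖ + m₁ * p * ‖v‖ := by
      gcongr ?_ + ?_
      · rw [hSv, abs_mul, abs_of_nonneg hgnn, abs_mul,
          abs_of_pos (inv_pos.mpr hr), ← mul_assoc]
        calc g r * r⁻¹ * |(inner ℝ c w : ℝ)| ≤ 1 * (m₁ * m₂ * Real.sqrt p * ‖v‖) := by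
              apply mul_le_mul hgrr ?_ (abs_nonneg _) zero_le_one
              calc |(inner ℝ c w : ℝ)| ≤ ‖c‖ * ‖w‖ := abs_real_inner_le_norm c w
              _ ≤ (m₁ * m₂ * Real.sqrt p) * ‖v‖ := by
                  apply mul_le_mul hcnorm hwv (norm_nonneg _) (by positivity)
        _ = m₁ * m₂ * Real.sqrt p * ‖v‖ := one_mul _
      · rw [abs_mul, abs_mul]
        calc |Q| * (|2*r/(1+r^2)^2| * |N v|) ≤ (m₁ * p) * (1 * ‖v‖) := by
              apply mul_le_mul hQb ?_ (by positivity) (by positivity)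
              exact mul_le_mul hg'b hNv (abs_nonneg _) zero_le_one
        _ = m₁ * p * ‖v‖ := by ring
  _ = (m₁ * p + m₁ * m₂ * Real.sqrt p) * ‖v‖ := by ring
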